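/- arXiv:1411.7341 — 2 statements merged into one kernel-verified Lean document; each statement's English description precedes it below -/
import Mathlib

section
/- Let F be a field, let n, d, ℓ be positive integers, and let β_1,…,β_d be distinct nonzero elements of F. Let A ∈ F[x_1,…,x_n] be a nonzero polynomial of individual degree at most d that has a nonzero coefficient on some monomial x^a with supp(a) < ℓ. Then there exists a point h ∈ {0,β_1,…,β_d}^n with supp(h) < ℓ such that A(h) ≠ 0. -/
open MvPolynomial Matrix

noncomputable section

variable {F : Type*} [Field F]

/-- `p` only involves the variable `i` (it is a univariate polynomial in `x_i`). -/
def UnivariateIn {n : ℕ} (i : Fin n) (p : MvPolynomial (Fin n) F) : Prop :=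
  ∀ m ∈ p.support, ∀ j : Fin n, j ≠ i → m j = 0

/-- The ordered product `D 0 * D 1 * ⋯ * D (n-1)` of the layer matrices of a branching program. -/
def layerProd {n w : ℕ} (D : Fin n → Matrix (Fin w) (Fin w) (MvPolynomial (Fin n) F)) :
    Matrix (Fin w) (Fin w) (MvPolynomial (Fin n) F) :=
  ((List.finRange n).map D).prod

/-- The ordered product of the first `k` layer matrices. -/
def prefixProd {n w : ℕ} (k : ℕ)
    (D : Fin n → Matrix (Fin w) (Fin w) (MvPolynomial (Fin n) F)) :
    Matrix (Fin w) (Fin w) (MvPolynomial (Fin n) F) :=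
  (((List.finRange n).take k).map D).prod

/-- `A` is computed by a read-once oblivious ABP of width `w` in variable order
`(x_{π 0}, …, x_{π (n-1)})`: `A = D₁ ⋯ Dₙ` where the entries of the `i`-th layer are
univariate polynomials in `x_{π i}`; the `1 × w` first layer and the `w × 1` last layer are
encoded by the constant selection vectors `u` and `v`. -/
def IsROABP {n : ℕ} (w : ℕ) (π : Equiv.Perm (Fin n)) (A : MvPolynomial (Fin n) F) : Prop :=
  ∃ (u : Matrix (Fin 1) (Fin w) F) (D : Fin n → Matrix (Fin w) (Fin w) (MvPolynomial (Fin n) F))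
    (v : Matrix (Fin w) (Fin 1) F),
    (∀ i r c, UnivariateIn (π i) (D i r c)) ∧
      A = ((u.map (MvPolynomial.C) : Matrix (Fin 1) (Fin w) (MvPolynomial (Fin n) F)) * layerProd D *
          (v.map (MvPolynomial.C) : Matrix (Fin w) (Fin 1) (MvPolynomial (Fin n) F)) :
        Matrix (Fin 1) (Fin 1) (MvPolynomial (Fin n) F)) 0 0

/-- The vector polynomial `P ∈ F[x]^{1×w}` is computed by an ROABP of width `w`
in variable order `π`. -/
def IsVecROABP {n : ℕ} (w : ℕ) (π : Equiv.Perm (Fin n))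
    (P : Fin w → MvPolynomial (Fin n) F) : Prop :=
  ∃ (u : Matrix (Fin 1) (Fin w) F) (D : Fin n → Matrix (Fin w) (Fin w) (MvPolynomial (Fin n) F)),
    (∀ i r c, UnivariateIn (π i) (D i r c)) ∧
      ∀ j, P j = (u.map (MvPolynomial.C) * layerProd D :
        Matrix (Fin 1) (Fin w) (MvPolynomial (Fin n) F)) 0 j

/-- The matrix polynomial `A ∈ F^{w×w}[x]` is computed by an ROABP of width `w`
in variable order `π`. -/
def IsMatROABP {n : ℕ} (w : ℕ) (π : Equiv.Perm (Fin n))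
    (A : Matrix (Fin w) (Fin w) (MvPolynomial (Fin n) F)) : Prop :=
  ∃ D : Fin n → Matrix (Fin w) (Fin w) (MvPolynomial (Fin n) F),
    (∀ i r c, UnivariateIn (π i) (D i r c)) ∧ A = layerProd D

/-- `A` has individual degree at most `d` in every variable. -/
def IndivDegLE {n : ℕ} (d : ℕ) (A : MvPolynomial (Fin n) F) : Prop :=
  ∀ m ∈ A.support, ∀ i, m i ≤ d

/-- The set of the first `k` variables `y_k = (x_0, …, x_{k-1})`. -/
def prefixFinset (n k : ℕ) : Finset (Fin n) := Finset.univ.filter fun i => (i : ℕ) < k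

/-- The coefficient polynomial `A_{(y,a)} ∈ F[z]`: the coefficient of the monomial `y^a`
when `A` is written as a polynomial in the variables `y` (those in `S`) with coefficients
in the remaining variables `z`. -/
def coeffWrt {n : ℕ} (S : Finset (Fin n)) (a : Fin n → ℕ) (A : MvPolynomial (Fin n) F) :
    MvPolynomial (Fin n) F :=
  ∑ m ∈ A.support.filter (fun m => ∀ i ∈ S, m i = a i),
    MvPolynomial.monomial (m.filter fun i => i ∉ S) (A.coeff m)

/-- The exponent vector supported on `S` with values given by `a`. -/
def expOn {n : ℕ} (S : Finset (Fin n)) (a : Fin n → ℕ) : Fin n →₀ ℕ :=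
  Finsupp.equivFunOnFinite.symm fun i => if i ∈ S then a i else 0

/-- A family of coefficients (of a polynomial over the `K`-vector space `V`) is
`ℓ`-concentrated over `K` if every coefficient lies in the `K`-span of the coefficients
of monomials of support `< ℓ`. -/
def Concentrated (K : Type*) [Field K] {V : Type*} [AddCommGroup V] [Module K V] {n : ℕ}
    (ℓ : ℕ) (cf : (Fin n →₀ ℕ) → V) : Prop :=
  ∀ a : Fin n →₀ ℕ, cf a ∈ Submodule.span K (cf '' {b | b.support.card < ℓ})

/-- The polynomial `A(x + f(t))`, with coefficients viewed in the rational function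
field `F(t)`. -/
def shiftBy {n : ℕ} (f : Fin n → Polynomial F) (A : MvPolynomial (Fin n) F) :
    MvPolynomial (Fin n) (RatFunc F) :=
  MvPolynomial.aeval
    (fun i => MvPolynomial.X i +
      MvPolynomial.C (algebraMap (Polynomial F) (RatFunc F) (f i))) A

/-- The polynomial `A(x + g(y,t))` for a bivariate shift `g ∈ F[y,t]^n`
(encoded with `y` the outer and `t` the inner variable), with coefficients viewed in the
rational function field `F(y,t)`. -/
def shiftBy₂ {n : ℕ} (g : Fin n → Polynomial (Polynomial F)) (A : MvPolynomial (Fin n) F) :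
    MvPolynomial (Fin n) (RatFunc (RatFunc F)) :=
  MvPolynomial.aeval
    (fun i => MvPolynomial.X i +
      MvPolynomial.C (algebraMap (Polynomial (RatFunc F)) (RatFunc (RatFunc F))
        ((g i).map (algebraMap (Polynomial F) (RatFunc F))))) A

end

/-- Auxiliary hitting-set lemma: a nonzero polynomial of individual degree `≤ d` has a
nonzero point on the grid `{0, β₁, …, β_d}^n`, which moreover is nonzero only on
coordinates appearing in the polynomial. -/
lemma aux_hitting {F : Type*} [Field F] {d : ℕ} (β : Fin d → F)
    (hβinj : Function.Injective β) (hβne : ∀ j, β j ≠ 0) :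
    ∀ (n : ℕ) (A : MvPolynomial (Fin n) F), A ≠ 0 → IndivDegLE d A →
    ∃ h : Fin n → F, (∀ i, h i = 0 ∨ ∃ j, h i = β j) ∧
      (∀ i, h i ≠ 0 → ∃ m ∈ A.support, m i ≠ 0) ∧ MvPolynomial.eval h A ≠ 0 := by
  intro n
  induction n with
  | zero =>
    intro A hA _
    refine ⟨fun _ => 0, fun i => Or.inl rfl, fun i => i.elim0, ?_⟩
    rw [MvPolynomial.eq_C_of_isEmpty A]
    simp only [MvPolynomial.eval_C]
    intro h
    apply hA
    rw [MvPolynomial.eq_C_of_isEmpty A, h, map_zero]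
  | succ n ih =>
    intro A hA hdeg
    set p := MvPolynomial.finSuccEquiv F n A with hpdef
    have hp0 : p ≠ 0 := by
      intro h
      exact hA ((map_eq_zero_iff _ (MvPolynomial.finSuccEquiv F n).injective).mp h)
    have hdegp : p.natDegree ≤ d := by
      rw [hpdef, MvPolynomial.natDegree_finSuccEquiv]
      exact MvPolynomial.degreeOf_le_iff.mpr fun m hm => hdeg m hm 0
    -- key coefficient relation
    have key : ∀ (c : F) (m : Fin n →₀ ℕ),
        MvPolynomial.coeff m (p.eval (MvPolynomial.C c)) ≠ 0 →
        ∃ k, MvPolynomial.coeff (m.cons k) A ≠ 0 := by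
      intro c m hne
      by_contra hall
      push_neg at hall
      apply hne
      rw [Polynomial.eval_eq_sum, Polynomial.sum, MvPolynomial.coeff_sum]
      refine Finset.sum_eq_zero fun k _ => ?_
      have : MvPolynomial.coeff m (p.coeff k) = 0 := by
        rw [MvPolynomial.finSuccEquiv_coeff_coeff]
        exact hall k
      rw [← MvPolynomial.C_pow, mul_comm, MvPolynomial.coeff_C_mul, this, mul_zero]
    -- find a good value c for the first variable
    have hexists : ∃ c : F, (c = 0 ∨ ∃ j, c = β j) ∧
        (c ≠ 0 → ∃ m ∈ A.support, m 0 ≠ 0) ∧ p.eval (MvPolynomial.C c) ≠ 0 := by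
      by_cases hq0 : p.eval (MvPolynomial.C (0 : F)) ≠ 0
      · exact ⟨0, Or.inl rfl, fun h => absurd rfl h, hq0⟩
      · push_neg at hq0
        have hvar0 : ∃ m ∈ A.support, m 0 ≠ 0 := by
          by_contra hall
          push_neg at hall
          have hdeg0 : p.natDegree = 0 := by
            rw [hpdef, MvPolynomial.natDegree_finSuccEquiv]
            exact Nat.le_zero.mp (MvPolynomial.degreeOf_le_iff.mpr
              fun m hm => Nat.le_zero.mpr (hall m hm))
          obtain ⟨r, hr⟩ := Polynomial.natDegree_eq_zero.mp hdeg0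
          rw [← hr, Polynomial.eval_C] at hq0
          exact hp0 (by rw [← hr, hq0, map_zero])
        have hj : ∃ j, p.eval (MvPolynomial.C (β j)) ≠ 0 := by
          by_contra hall
          push_neg at hall
          apply hp0
          apply Polynomial.eq_zero_of_natDegree_lt_card_of_eval_eq_zero p
            (f := fun o : Option (Fin d) =>
              o.elim (0 : MvPolynomial (Fin n) F) (fun j => MvPolynomial.C (β j)))
          · intro o₁ o₂ h
            match o₁, o₂ with
            | none, none => rfl
            | none, some j =>
              exact absurd h.symm (by simpa [MvPolynomial.C_eq_zero] using hβne j)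
            | some j, none =>
              exact absurd h (by simpa [MvPolynomial.C_eq_zero] using hβne j)
            | some j₁, some j₂ =>
              simp only [Option.elim] at h
              exact congrArg some (hβinj (MvPolynomial.C_injective _ _ h))
          · rintro (_ | j)
            · simpa using hq0
            · simpa using hall j
          · simpa using Nat.lt_succ_of_le hdegp
        obtain ⟨j, hj⟩ := hj
        exact ⟨β j, Or.inr ⟨j, rfl⟩, fun _ => hvar0, hj⟩
    obtain ⟨c, hcval, hc0, hqc⟩ := hexists
    set B := p.eval (MvPolynomial.C c) with hBdef
    have hdegB : IndivDegLE d B := by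
      intro m hm i
      obtain ⟨k, hk⟩ := key c m (MvPolynomial.mem_support_iff.mp hm)
      have := hdeg (m.cons k) (MvPolynomial.mem_support_iff.mpr hk) i.succ
      simpa [Finsupp.cons_succ] using this
    obtain ⟨h', hh1, hh2, hh3⟩ := ih B hqc hdegB
    refine ⟨Fin.cons c h', ?_, ?_, ?_⟩
    · intro i
      refine Fin.cases ?_ ?_ i
      · simpa using hcval
      · intro i'; simpa using hh1 i'
    · intro i
      refine Fin.cases ?_ ?_ i
      · intro hne
        rw [Fin.cons_zero] at hne
        exact hc0 hne
      · intro i' hne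
        rw [Fin.cons_succ] at hne
        obtain ⟨m', hm'sup, hm'i⟩ := hh2 i' hne
        obtain ⟨k, hk⟩ := key c m' (MvPolynomial.mem_support_iff.mp hm'sup)
        exact ⟨m'.cons k, MvPolynomial.mem_support_iff.mpr hk, by
          simpa [Finsupp.cons_succ] using hm'i⟩
    · have e1 : Polynomial.eval c (p.map (MvPolynomial.eval h')) =
          MvPolynomial.eval h' (p.eval (MvPolynomial.C c)) := by
        rw [Polynomial.eval_map,
          show c = MvPolynomial.eval h' (MvPolynomial.C c) from
            (MvPolynomial.eval_C _).symm,
          Polynomial.eval₂_at_apply]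
        simp
      rw [MvPolynomial.eval_eq_eval_mv_eval', e1]
      exact hh3

/-- Lemma 4.3 of the paper, hitting set for concentrated polynomials:
if a nonzero polynomial `A` of individual degree `≤ d` has a nonzero coefficient on a monomial
of support `< ℓ`, then `A` has a nonzero point in the grid `{0, β₁, …, β_d}^n` of support `< ℓ`,
where the `βⱼ`'s are distinct nonzero field elements. -/
theorem exists_low_support_nonzero_point_of_concentrated
    {F : Type*} [Field F] {n d ℓ : ℕ} (hn : 0 < n) (hd : 0 < d) (hl : 0 < ℓ)
    (β : Fin d → F) (hβinj : Function.Injective β) (hβne : ∀ j, β j ≠ 0)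
    (A : MvPolynomial (Fin n) F) (hA : A ≠ 0) (hdeg : IndivDegLE d A)
    (hconc : ∃ a : Fin n →₀ ℕ, A.coeff a ≠ 0 ∧ a.support.card < ℓ) :
    ∃ h : Fin n → F,
      (∀ i, h i = 0 ∨ ∃ j, h i = β j) ∧
      (Function.support h).ncard < ℓ ∧
      MvPolynomial.eval h A ≠ 0 := by
  classical
  obtain ⟨a, ha, hacard⟩ := hconc
  set S := a.support with hSdef
  set T := A.support.filter (fun m => m.support ⊆ S) with hTdef
  set B : MvPolynomial (Fin n) F :=
    ∑ m ∈ T, MvPolynomial.monomial m (A.coeff m) with hBdef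
  have hcoeffB : ∀ b, B.coeff b = if b ∈ T then A.coeff b else 0 := by
    intro b
    rw [hBdef, MvPolynomial.coeff_sum]
    simp only [MvPolynomial.coeff_monomial]
    rw [Finset.sum_ite_eq' T b (fun m => A.coeff m)]
  have haT : a ∈ T := by
    rw [hTdef, Finset.mem_filter]
    exact ⟨MvPolynomial.mem_support_iff.mpr ha, fun i hi => hi⟩
  have hB0 : B ≠ 0 := fun h => by
    have := hcoeffB a
    rw [h, if_pos haT, MvPolynomial.coeff_zero] at this
    exact ha this.symm
  have hsupB : B.support ⊆ T := by
    intro b hb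
    by_contra hbT
    rw [MvPolynomial.mem_support_iff, hcoeffB b, if_neg hbT] at hb
    exact hb rfl
  have hdegB : IndivDegLE d B := fun m hm i =>
    hdeg m (Finset.mem_filter.mp (hsupB hm)).1 i
  obtain ⟨h, hh1, hh2, hh3⟩ := aux_hitting β hβinj hβne n B hB0 hdegB
  have hsuppS : ∀ i, h i ≠ 0 → i ∈ S := by
    intro i hi
    obtain ⟨m, hm, hmi⟩ := hh2 i hi
    exact (Finset.mem_filter.mp (hsupB hm)).2 (Finsupp.mem_support_iff.mpr hmi)
  refine ⟨h, hh1, ?_, ?_⟩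
  · calc (Function.support h).ncard ≤ (↑S : Set (Fin n)).ncard :=
          Set.ncard_le_ncard (fun i hi => hsuppS i hi) (Set.toFinite _)
      _ = S.card := Set.ncard_coe_finset S
      _ < ℓ := hacard
  · have heq : MvPolynomial.eval h A = MvPolynomial.eval h B := by
      rw [MvPolynomial.eval_eq h A, hBdef, map_sum]
      simp only [MvPolynomial.eval_monomial]
      simp only [Finsupp.prod]
      refine (Finset.sum_subset (Finset.filter_subset _ _) ?_).symm
      intro m hm hmT
      have : ¬ m.support ⊆ S := by
        intro hms
        exact hmT (Finset.mem_filter.mpr ⟨hm, hms⟩)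
      obtain ⟨i, hiM, hiS⟩ := Finset.not_subset.mp this
      have hhi : h i = 0 := by
        by_contra hne
        exact hiS (hsuppS i hne)
      refine mul_eq_zero_of_right _ ?_
      refine Finset.prod_eq_zero hiM ?_
      rw [hhi]
      exact zero_pow (Finsupp.mem_support_iff.mp hiM)
    rw [heq]
    exact hh3
end

section
/- Let F be a field, ℓ ≥ 1 an integer, and V ∈ F[x_1,…,x_n] a nonzero polynomial with at most 2^ℓ − 1 monomials having nonzero coefficients (sparsity ≤ 2^ℓ − 1). Then the shifted polynomial V(x_1+1, x_2+1, …, x_n+1) has a nonzero coefficient on some monomial x^a with supp(a) < ℓ. -/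
open MvPolynomial Matrix

open MvPolynomial

namespace SparseShiftAux

variable {F : Type*} [Field F] {n : ℕ}

lemma coeff_shift_monomial :
    ∀ (N : ℕ) (m a : Fin n →₀ ℕ), (∑ j, m j) ≤ N →
    MvPolynomial.coeff a
      (MvPolynomial.aeval (fun j => (MvPolynomial.X j + 1 : MvPolynomial (Fin n) F))
        (MvPolynomial.monomial m 1 : MvPolynomial (Fin n) F)) =
      ∏ j, ((m j).choose (a j) : F) := by
  intro N
  induction N with
  | zero =>
    intro m a hm
    have hm0 : m = 0 := by
      ext k
      have := Finset.sum_eq_zero_iff.mp (Nat.le_zero.mp hm) k (Finset.mem_univ k)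
      simpa using this
    subst hm0
    rw [monomial_zero', _root_.map_one, _root_.map_one]
    by_cases ha : a = 0
    · subst ha; simp
    · obtain ⟨j, hj⟩ := Finsupp.ne_iff.mp ha
      simp only [Finsupp.coe_zero, Pi.zero_apply] at hj
      rw [coeff_one, if_neg (by exact fun h => ha h.symm)]
      rw [eq_comm, Finset.prod_eq_zero (Finset.mem_univ j)]
      have : (0:ℕ).choose (a j) = 0 := Nat.choose_eq_zero_of_lt (Nat.pos_of_ne_zero hj)
      simp [this]
  | succ N ih =>
    intro m a hm
    by_cases h0 : m = 0
    · subst h0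
      exact ih 0 a (by simp)
    · obtain ⟨j, hj⟩ := Finsupp.ne_iff.mp h0
      simp only [Finsupp.coe_zero, Pi.zero_apply] at hj
      set m' := m - Finsupp.single j 1 with hm'def
      have hmm : m' + Finsupp.single j 1 = m := by
        ext k
        rcases eq_or_ne k j with rfl | hk
        · simp only [Finsupp.add_apply, Finsupp.tsub_apply, Finsupp.single_eq_same, hm'def]
          omega
        · simp [hm'def, Finsupp.single_eq_of_ne' (Ne.symm hk)]
      have hmj : m j = m' j + 1 := by
        have := congrFun (congrArg (fun f : Fin n →₀ ℕ => (f : Fin n → ℕ)) hmm) j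
        simp only [Finsupp.coe_add, Pi.add_apply, Finsupp.single_eq_same] at this
        omega
      have hmk : ∀ k, k ≠ j → m k = m' k := by
        intro k hk
        have := congrFun (congrArg (fun f : Fin n →₀ ℕ => (f : Fin n → ℕ)) hmm) k
        simp only [Finsupp.coe_add, Pi.add_apply,
          Finsupp.single_eq_of_ne' (Ne.symm hk)] at this
        omega
      have hsum : (∑ k, m' k) ≤ N := by
        have h1 : (∑ k, m k) = (∑ k, m' k) + 1 := by
          rw [← hmm]
          simp only [Finsupp.coe_add, Pi.add_apply, Finset.sum_add_distrib]
          congr 1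
          simp [Finsupp.single_apply]
        omega
      have hxj : (X j : MvPolynomial (Fin n) F) = monomial (Finsupp.single j 1) 1 := by
        rw [← X_pow_eq_monomial, pow_one]
      have hmon : (monomial m (1:F)) = monomial m' 1 * X j := by
        rw [hxj, monomial_mul, one_mul, hmm]
      rw [hmon, _root_.map_mul, aeval_X, mul_add, mul_one, coeff_add, coeff_mul_X']
      by_cases ha : a j = 0
      · rw [if_neg (by simp [Finsupp.mem_support_iff, ha]), zero_add, ih m' a hsum]
        refine Finset.prod_congr rfl fun k _ => ?_
        rcases eq_or_ne k j with rfl | hk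
        · rw [ha]; simp
        · rw [hmk k hk]
      · rw [if_pos (by simp [Finsupp.mem_support_iff, ha]), ih m' _ hsum, ih m' a hsum]
        have e1 : ∀ k, k ≠ j → ((a - Finsupp.single j 1 : Fin n →₀ ℕ) k) = a k := by
          intro k hk
          simp [Finsupp.tsub_apply, Finsupp.single_eq_of_ne' (Ne.symm hk)]
        have e2 : ((a - Finsupp.single j 1 : Fin n →₀ ℕ) j) = a j - 1 := by
          simp [Finsupp.tsub_apply]
        rw [← Finset.mul_prod_erase Finset.univ
            (fun k => (((m' k).choose ((a - Finsupp.single j 1 : Fin n →₀ ℕ) k)) : F)) (Finset.mem_univ j),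
          ← Finset.mul_prod_erase Finset.univ
            (fun k => (((m' k).choose (a k)) : F)) (Finset.mem_univ j),
          ← Finset.mul_prod_erase Finset.univ
            (fun k => (((m k).choose (a k)) : F)) (Finset.mem_univ j)]
        have ep : ∀ k ∈ Finset.univ.erase j,
            (((m' k).choose ((a - Finsupp.single j 1 : Fin n →₀ ℕ) k)) : F) = ((m' k).choose (a k) : F) := by
          intro k hk
          rw [e1 k (Finset.mem_erase.mp hk).1]
        have ep2 : ∀ k ∈ Finset.univ.erase j,
            (((m k).choose (a k)) : F) = ((m' k).choose (a k) : F) := by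
          intro k hk
          rw [hmk k (Finset.mem_erase.mp hk).1]
        rw [Finset.prod_congr rfl ep, Finset.prod_congr rfl ep2, ← add_mul]
        congr 1
        rw [e2, hmj]
        obtain ⟨e, he⟩ := Nat.exists_eq_succ_of_ne_zero ha
        rw [he]
        simp only [Nat.succ_sub_one]
        rw [Nat.choose_succ_succ]
        push_cast
        ring

lemma coeff_shift_sum (s : Finset (Fin n →₀ ℕ)) (c : (Fin n →₀ ℕ) → F)
    (g : (Fin n →₀ ℕ) → (Fin n →₀ ℕ)) (a : Fin n →₀ ℕ) :
    MvPolynomial.coeff a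
      (MvPolynomial.aeval (fun j => (MvPolynomial.X j + 1 : MvPolynomial (Fin n) F))
        (∑ m ∈ s, MvPolynomial.monomial (g m) (c m))) =
      ∑ m ∈ s, c m * ∏ j, ((g m j).choose (a j) : F) := by
  rw [_root_.map_sum, coeff_sum]
  refine Finset.sum_congr rfl fun m _ => ?_
  have h1 : (monomial (g m) (c m) : MvPolynomial (Fin n) F) = C (c m) * monomial (g m) 1 := by
    rw [C_mul_monomial, mul_one]
  rw [h1, _root_.map_mul, aeval_C, MvPolynomial.algebraMap_eq, coeff_C_mul,
    coeff_shift_monomial (∑ j, g m j) _ _ le_rfl]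

lemma coeff_shift (V : MvPolynomial (Fin n) F) (a : Fin n →₀ ℕ) :
    MvPolynomial.coeff a
      (MvPolynomial.aeval (fun j => (MvPolynomial.X j + 1 : MvPolynomial (Fin n) F)) V) =
      ∑ m ∈ V.support, V.coeff m * ∏ j, ((m j).choose (a j) : F) := by
  conv_lhs => rw [V.as_sum]
  exact coeff_shift_sum V.support (fun m => V.coeff m) id a

end SparseShiftAux

namespace SparseShiftAux

variable {F : Type*} [Field F] {n : ℕ}

lemma key0 (V : MvPolynomial (Fin n) F) (hv : V.vars = ∅) (hV : V ≠ 0) :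
    ∃ a : Fin n →₀ ℕ, 2 ^ a.support.card ≤ V.support.card ∧
      MvPolynomial.coeff a
        (MvPolynomial.aeval (fun j => (MvPolynomial.X j + 1 : MvPolynomial (Fin n) F)) V) ≠ 0 := by
  have hne : V.support.Nonempty := support_nonempty.mpr hV
  have hsub : V.support ⊆ {0} := by
    intro m hm
    have hm0 : m = 0 := by
      ext k
      by_contra hk
      have : k ∈ V.vars := (mem_vars k).mpr ⟨m, hm, Finsupp.mem_support_iff.mpr hk⟩
      simp [hv] at this
    simp [hm0]
  have hsupp : V.support = {0} := by
    rcases Finset.subset_singleton_iff.mp hsub with h | h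
    · exact absurd h (Finset.nonempty_iff_ne_empty.mp hne)
    · exact h
  refine ⟨0, ?_, ?_⟩
  · simp [hsupp]
  · rw [coeff_shift, hsupp, Finset.sum_singleton]
    have h0 : (0 : Fin n →₀ ℕ) ∈ V.support := by simp [hsupp]
    simpa using MvPolynomial.mem_support_iff.mp h0

lemma key : ∀ (k : ℕ) (V : MvPolynomial (Fin n) F), V.vars.card ≤ k → V ≠ 0 →
    ∃ a : Fin n →₀ ℕ, 2 ^ a.support.card ≤ V.support.card ∧
      MvPolynomial.coeff a
        (MvPolynomial.aeval (fun j => (MvPolynomial.X j + 1 : MvPolynomial (Fin n) F)) V) ≠ 0 := by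
  intro k
  induction k with
  | zero =>
    intro V hk hV
    exact key0 V (Finset.card_eq_zero.mp (Nat.le_zero.mp hk)) hV
  | succ k ih =>
    intro V hk hV
    by_cases hv : V.vars = ∅
    · exact key0 V hv hV
    · obtain ⟨i, hi⟩ := Finset.nonempty_iff_ne_empty.mpr hv
      classical
      have hgen_supp : ∀ s : Finset (Fin n →₀ ℕ), s ⊆ V.support →
          (∑ m ∈ s, monomial (Finsupp.erase i m) (V.coeff m) : MvPolynomial (Fin n) F).support ⊆
            s.image (Finsupp.erase i) := by
        intro s hs b hb
        have hb' := MvPolynomial.support_sum hb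
        obtain ⟨m, hm, hbm⟩ := Finset.mem_biUnion.mp hb'
        have hcm : V.coeff m ≠ 0 := MvPolynomial.mem_support_iff.mp (hs hm)
        rw [support_monomial, if_neg hcm] at hbm
        exact Finset.mem_image.mpr ⟨m, hm, (Finset.mem_singleton.mp hbm).symm⟩
      have hgen_vars : ∀ s : Finset (Fin n →₀ ℕ), s ⊆ V.support →
          (∑ m ∈ s, monomial (Finsupp.erase i m) (V.coeff m) : MvPolynomial (Fin n) F).vars ⊆
            V.vars.erase i := by
        intro s hs j hjv
        obtain ⟨b, hb, hjb⟩ := (mem_vars j).mp hjv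
        obtain ⟨m, hm, hbm⟩ := Finset.mem_image.mp (hgen_supp s hs hb)
        rw [← hbm] at hjb
        have hjb' : (Finsupp.erase i m) j ≠ 0 := Finsupp.mem_support_iff.mp hjb
        have hji : j ≠ i := by rintro rfl; rw [Finsupp.erase_same] at hjb'; exact hjb' rfl
        rw [Finsupp.erase_ne hji] at hjb'
        exact Finset.mem_erase.mpr
          ⟨hji, (mem_vars j).mpr ⟨m, hs hm, Finsupp.mem_support_iff.mpr hjb'⟩⟩
      have hgen_coeff : ∀ (s : Finset (Fin n →₀ ℕ)) (b : Fin n →₀ ℕ),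
          MvPolynomial.coeff b
            (∑ m ∈ s, monomial (Finsupp.erase i m) (V.coeff m) : MvPolynomial (Fin n) F) =
            ∑ m ∈ s, if Finsupp.erase i m = b then V.coeff m else 0 := by
        intro s b
        rw [coeff_sum]
        refine Finset.sum_congr rfl fun m _ => ?_
        rw [coeff_monomial]
      have hcard_vars : (V.vars.erase i).card ≤ k := by
        have h1 := Finset.card_erase_of_mem hi
        omega
      have hzero : ∀ (s : Finset (Fin n →₀ ℕ)) (a : Fin n →₀ ℕ), a i ≠ 0 →
          MvPolynomial.coeff a
            (MvPolynomial.aeval (fun j => (MvPolynomial.X j + 1 : MvPolynomial (Fin n) F))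
              (∑ m ∈ s, monomial (Finsupp.erase i m) (V.coeff m))) = 0 := by
        intro s a hai
        rw [coeff_shift_sum]
        refine Finset.sum_eq_zero fun m _ => ?_
        have hz : ((Finsupp.erase i m i).choose (a i) : F) = 0 := by
          rw [Finsupp.erase_same, Nat.choose_eq_zero_of_lt (Nat.pos_of_ne_zero hai),
            Nat.cast_zero]
        rw [Finset.prod_eq_zero (Finset.mem_univ i) hz, mul_zero]
      by_cases hT :
          (∑ m ∈ V.support, monomial (Finsupp.erase i m) (V.coeff m) : MvPolynomial (Fin n) F) = 0
      · -- Case B: the full erased sum vanishes; use the top slice in x_i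
        obtain ⟨m1, hm1, hm1i⟩ := (mem_vars i).mp hi
        have hle : ∀ m ∈ V.support, m i ≤ degreeOf i V := by
          intro m hm
          rw [degreeOf_eq_sup]
          exact Finset.le_sup (f := fun m : Fin n →₀ ℕ => m i) hm
        have hd1 : 1 ≤ degreeOf i V :=
          le_trans (Nat.one_le_iff_ne_zero.mpr (Finsupp.mem_support_iff.mp hm1i)) (hle m1 hm1)
        have hsdsub : V.support.filter (fun m => m i = degreeOf i V) ⊆ V.support :=
          Finset.filter_subset _ _
        have herase_eq : ∀ b : Fin n →₀ ℕ, b i = 0 → ∀ m : Fin n →₀ ℕ, m i = degreeOf i V →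
            (Finsupp.erase i m = b ↔ m = b + Finsupp.single i (degreeOf i V)) := by
          intro b hb m hmd
          constructor
          · intro h
            ext kk
            rcases eq_or_ne kk i with rfl | hkk
            · simp [hmd, Finsupp.single_eq_same, hb]
            · have h2 : m kk = b kk := by rw [← h, Finsupp.erase_ne hkk]
              simp [h2, Finsupp.single_eq_of_ne' (Ne.symm hkk)]
          · rintro rfl
            ext kk
            rcases eq_or_ne kk i with rfl | hkk
            · simp [Finsupp.erase_same, hb]
            · simp [Finsupp.erase_ne hkk, Finsupp.single_eq_of_ne' (Ne.symm hkk)]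
        have hVdcoeff : ∀ b : Fin n →₀ ℕ, b i = 0 →
            MvPolynomial.coeff b
              (∑ m ∈ V.support.filter (fun m => m i = degreeOf i V),
                monomial (Finsupp.erase i m) (V.coeff m) : MvPolynomial (Fin n) F)
              = V.coeff (b + Finsupp.single i (degreeOf i V)) := by
          intro b hb
          rw [hgen_coeff]
          have hc2 : ∀ m ∈ V.support.filter (fun m => m i = degreeOf i V),
              (if Finsupp.erase i m = b then V.coeff m else 0)
              = (if m = b + Finsupp.single i (degreeOf i V) then V.coeff m else 0) := by
            intro m hm
            exact if_congr (herase_eq b hb m (Finset.mem_filter.mp hm).2) rfl rfl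
          rw [Finset.sum_congr rfl hc2,
            Finset.sum_ite_eq' (V.support.filter (fun m => m i = degreeOf i V))
              (b + Finsupp.single i (degreeOf i V)) (fun m => V.coeff m)]
          by_cases hmem : b + Finsupp.single i (degreeOf i V) ∈
              V.support.filter (fun m => m i = degreeOf i V)
          · rw [if_pos hmem]
          · rw [if_neg hmem]
            have hbd : (b + Finsupp.single i (degreeOf i V)) i = degreeOf i V := by
              simp [Finsupp.single_eq_same, hb]
            have hnot : b + Finsupp.single i (degreeOf i V) ∉ V.support := fun h =>
              hmem (Finset.mem_filter.mpr ⟨h, hbd⟩)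
            exact (MvPolynomial.notMem_support_iff.mp hnot).symm
        have hVdsupp : ∀ b ∈ (∑ m ∈ V.support.filter (fun m => m i = degreeOf i V),
            monomial (Finsupp.erase i m) (V.coeff m) : MvPolynomial (Fin n) F).support,
            b i = 0 := by
          intro b hb
          obtain ⟨m, hm, hbm⟩ := Finset.mem_image.mp (hgen_supp _ hsdsub hb)
          rw [← hbm]
          exact Finsupp.erase_same
        have hVdne : (∑ m ∈ V.support.filter (fun m => m i = degreeOf i V),
            monomial (Finsupp.erase i m) (V.coeff m) : MvPolynomial (Fin n) F) ≠ 0 := by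
          obtain ⟨m0, hm0, hm0d⟩ :=
            Finset.exists_mem_eq_sup V.support (support_nonempty.mpr hV) (fun m : Fin n →₀ ℕ => m i)
          have hd0 : m0 i = degreeOf i V := by rw [degreeOf_eq_sup, hm0d]
          have hb0 : (Finsupp.erase i m0) i = 0 := Finsupp.erase_same
          have hb0d : Finsupp.erase i m0 + Finsupp.single i (degreeOf i V) = m0 :=
            ((herase_eq (Finsupp.erase i m0) hb0 m0 hd0).mp rfl).symm
          intro h
          have h2 := hVdcoeff (Finsupp.erase i m0) hb0
          rw [h, MvPolynomial.coeff_zero, hb0d] at h2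
          exact (MvPolynomial.mem_support_iff.mp hm0) h2.symm
        have hex : ∀ b ∈ (∑ m ∈ V.support.filter (fun m => m i = degreeOf i V),
            monomial (Finsupp.erase i m) (V.coeff m) : MvPolynomial (Fin n) F).support,
            ∃ m, m ∈ V.support ∧ Finsupp.erase i m = b ∧ m i ≠ degreeOf i V := by
          intro b hb
          by_contra hcon
          push_neg at hcon
          have hTb := congrArg (MvPolynomial.coeff b) hT
          rw [hgen_coeff V.support b, MvPolynomial.coeff_zero] at hTb
          have hsplit : ∑ m ∈ V.support, (if Finsupp.erase i m = b then V.coeff m else 0)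
              = ∑ m ∈ V.support.filter (fun m => m i = degreeOf i V),
                  (if Finsupp.erase i m = b then V.coeff m else 0) := by
            symm
            refine Finset.sum_subset hsdsub ?_
            intro m hm hmns
            rw [if_neg]
            intro heq
            exact hmns (Finset.mem_filter.mpr ⟨hm, hcon m hm heq⟩)
          rw [hsplit, ← hgen_coeff _ b] at hTb
          exact (MvPolynomial.mem_support_iff.mp hb) hTb
        have hcount : 2 * (∑ m ∈ V.support.filter (fun m => m i = degreeOf i V),
            monomial (Finsupp.erase i m) (V.coeff m) : MvPolynomial (Fin n) F).support.card
            ≤ V.support.card := by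
          set W := (∑ m ∈ V.support.filter (fun m => m i = degreeOf i V),
            monomial (Finsupp.erase i m) (V.coeff m) : MvPolynomial (Fin n) F) with hW
          set f2 : (Fin n →₀ ℕ) → (Fin n →₀ ℕ) := fun b =>
            if h : ∃ m, m ∈ V.support ∧ Finsupp.erase i m = b ∧ m i ≠ degreeOf i V
            then h.choose else 0 with hf2
          have hf2spec : ∀ b ∈ W.support,
              f2 b ∈ V.support ∧ Finsupp.erase i (f2 b) = b ∧ (f2 b) i ≠ degreeOf i V := by
            intro b hb
            have h := hex b hb
            rw [hf2]
            simp only [dif_pos h]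
            exact h.choose_spec
          have hB1sub : W.support.image (fun b => b + Finsupp.single i (degreeOf i V))
              ⊆ V.support := by
            intro x hx
            obtain ⟨b, hb, rfl⟩ := Finset.mem_image.mp hx
            rw [MvPolynomial.mem_support_iff, ← hVdcoeff b (hVdsupp b hb)]
            exact MvPolynomial.mem_support_iff.mp hb
          have hB2sub : W.support.image f2 ⊆ V.support := by
            intro x hx
            obtain ⟨b, hb, rfl⟩ := Finset.mem_image.mp hx
            exact (hf2spec b hb).1
          have hB1card : (W.support.image (fun b => b + Finsupp.single i (degreeOf i V))).card
              = W.support.card :=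
            Finset.card_image_of_injOn (fun b _ b' _ h => add_right_cancel h)
          have hB2card : (W.support.image f2).card = W.support.card := by
            refine Finset.card_image_of_injOn ?_
            intro b hb b' hb' h
            have h1 := (hf2spec b hb).2.1
            have h2 := (hf2spec b' hb').2.1
            rw [← h1, ← h2, h]
          have hdisj : Disjoint (W.support.image (fun b => b + Finsupp.single i (degreeOf i V)))
              (W.support.image f2) := by
            rw [Finset.disjoint_left]
            intro x hx1 hx2
            obtain ⟨b, hb, rfl⟩ := Finset.mem_image.mp hx1
            obtain ⟨b', hb', heq⟩ := Finset.mem_image.mp hx2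
            have hxi : (b + Finsupp.single i (degreeOf i V)) i = degreeOf i V := by
              simp [Finsupp.single_eq_same, hVdsupp b hb]
            exact (hf2spec b' hb').2.2 (by rw [heq, hxi])
          have hcu := Finset.card_union_of_disjoint hdisj
          have hcard := Finset.card_le_card (Finset.union_subset hB1sub hB2sub)
          omega
        obtain ⟨a, ha2, hane⟩ := ih _
          (le_trans (Finset.card_le_card (hgen_vars _ hsdsub)) hcard_vars) hVdne
        have hai : a i = 0 := by
          by_contra hai
          exact hane (hzero _ a hai)
        have ha'i : (a + Finsupp.single i (degreeOf i V)) i = degreeOf i V := by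
          simp [Finsupp.single_eq_same, hai]
        have ha'k : ∀ kk, kk ≠ i →
            (a + Finsupp.single i (degreeOf i V)) kk = a kk := by
          intro kk hkk
          simp [Finsupp.single_eq_of_ne' (Ne.symm hkk)]
        have hcoeff_eq : MvPolynomial.coeff (a + Finsupp.single i (degreeOf i V))
              (MvPolynomial.aeval (fun j => (MvPolynomial.X j + 1 : MvPolynomial (Fin n) F)) V)
            = MvPolynomial.coeff a
              (MvPolynomial.aeval (fun j => (MvPolynomial.X j + 1 : MvPolynomial (Fin n) F))
                (∑ m ∈ V.support.filter (fun m => m i = degreeOf i V),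
                  monomial (Finsupp.erase i m) (V.coeff m))) := by
          rw [coeff_shift, coeff_shift_sum,
            ← Finset.sum_filter_add_sum_filter_not V.support (fun m => m i = degreeOf i V)
              (fun m => V.coeff m *
                ∏ j, ((m j).choose ((a + Finsupp.single i (degreeOf i V)) j) : F))]
          have h2 : ∑ m ∈ V.support.filter (fun m => ¬ m i = degreeOf i V),
              V.coeff m * ∏ j, ((m j).choose ((a + Finsupp.single i (degreeOf i V)) j) : F)
              = 0 := by
            refine Finset.sum_eq_zero fun m hm => ?_
            obtain ⟨hmV, hmd⟩ := Finset.mem_filter.mp hm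
            have hlt : m i < degreeOf i V := lt_of_le_of_ne (hle m hmV) hmd
            have hz : ((m i).choose ((a + Finsupp.single i (degreeOf i V)) i) : F) = 0 := by
              rw [ha'i, Nat.choose_eq_zero_of_lt hlt, Nat.cast_zero]
            rw [Finset.prod_eq_zero (Finset.mem_univ i) hz, mul_zero]
          rw [h2, add_zero]
          refine Finset.sum_congr rfl fun m hm => ?_
          congr 1
          refine Finset.prod_congr rfl fun j _ => ?_
          rcases eq_or_ne j i with rfl | hji
          · rw [ha'i, (Finset.mem_filter.mp hm).2, Finsupp.erase_same, hai]
            simp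
          · rw [ha'k j hji, Finsupp.erase_ne hji]
        have hsa' : (a + Finsupp.single i (degreeOf i V)).support.card
            = a.support.card + 1 := by
          have hdne : degreeOf i V ≠ 0 := by omega
          have hdisj : Disjoint a.support (Finsupp.single i (degreeOf i V)).support := by
            rw [Finsupp.support_single_ne_zero i hdne, Finset.disjoint_singleton_right]
            simp [Finsupp.mem_support_iff, hai]
          rw [Finsupp.support_add_eq hdisj, Finset.card_union_of_disjoint hdisj,
            Finsupp.support_single_ne_zero i hdne, Finset.card_singleton]
        refine ⟨a + Finsupp.single i (degreeOf i V), ?_, ?_⟩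
        · rw [hsa', pow_succ]
          have := Nat.mul_le_mul_right 2 ha2
          omega
        · rw [hcoeff_eq]
          exact hane
      · -- Case A
        obtain ⟨a, ha2, hane⟩ := ih _
          (le_trans (Finset.card_le_card (hgen_vars V.support (subset_refl _))) hcard_vars) hT
        have hai : a i = 0 := by
          by_contra hai
          exact hane (hzero V.support a hai)
        refine ⟨a, ?_, ?_⟩
        · refine le_trans ha2 (le_trans
            (Finset.card_le_card (hgen_supp V.support (subset_refl _))) Finset.card_image_le)
        · rw [coeff_shift]
          rw [coeff_shift_sum] at hane
          have heq : ∑ m ∈ V.support, V.coeff m * ∏ j, ((m j).choose (a j) : F)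
              = ∑ m ∈ V.support, V.coeff m * ∏ j, ((Finsupp.erase i m j).choose (a j) : F) := by
            refine Finset.sum_congr rfl fun m _ => ?_
            congr 1
            refine Finset.prod_congr rfl fun j _ => ?_
            rcases eq_or_ne j i with rfl | hji
            · rw [hai, Finsupp.erase_same]
              simp
            · rw [Finsupp.erase_ne hji]
          rw [heq]
          exact hane

end SparseShiftAux

/-- Claim 5.4 of the paper, concentration in sparse polynomials: if `V` is a
nonzero polynomial with sparsity at most `2^ℓ - 1`, then `V(x + 1)` has a nonzero coefficient
on some monomial of support `< ℓ`. -/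
theorem sparse_shift_by_one_has_low_support_coeff
    {F : Type*} [Field F] {n ℓ : ℕ} (hl : 1 ≤ ℓ)
    (V : MvPolynomial (Fin n) F) (hV : V ≠ 0)
    (hsparse : V.support.card ≤ 2 ^ ℓ - 1) :
    ∃ a : Fin n →₀ ℕ, a.support.card < ℓ ∧
      (MvPolynomial.aeval (fun i => MvPolynomial.X i + 1) V :
        MvPolynomial (Fin n) F).coeff a ≠ 0 := by
  obtain ⟨a, ha2, hane⟩ := SparseShiftAux.key V.vars.card V le_rfl hV
  refine ⟨a, ?_, hane⟩
  have h1 : 2 ^ a.support.card ≤ 2 ^ ℓ - 1 := le_trans ha2 hsparse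
  have h2 : 1 ≤ 2 ^ ℓ := Nat.one_le_two_pow
  by_contra hcon
  push_neg at hcon
  have h3 := Nat.pow_le_pow_right (by norm_num : 1 ≤ 2) hcon
  omega
end
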